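/- Relationship between Walsh coefficients and discrete Fourier coefficients of the discretization: for integrable f : [0,1)^s → ℝ and A ∈ ℤ_b^{s×n}, the complex conjugate of the φ(A)-th Walsh coefficient of f equals the discrete Fourier coefficient f̂_n(A) of the n-digit discretization, where φ(A) = (∑_{j=1}^n a_{i,j} b^{j−1})_{i=1}^s. -/

import Mathlib

open MeasureTheory
open scoped ComplexConjugate


/-- `j`-th `b`-adic digit of `t` (0-indexed: digit of weight `b^{-(j+1)}`). -/
noncomputable def bdigit (b : ℕ) (t : ℝ) (j : ℕ) : ℤ := ⌊t * (b:ℝ) ^ (j+1)⌋ % (b : ℤ)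

lemma bdigit_nonneg {b : ℕ} (hb : 2 ≤ b) (t : ℝ) (j : ℕ) : 0 ≤ bdigit b t j :=
  Int.emod_nonneg _ (by positivity)

lemma bdigit_lt {b : ℕ} (hb : 2 ≤ b) (t : ℝ) (j : ℕ) : bdigit b t j < b :=
  Int.emod_lt_of_pos _ (by positivity)

lemma bdigit_eq_sub {b : ℕ} (hb : 2 ≤ b) (t : ℝ) (j : ℕ) :
    bdigit b t j = ⌊t * (b:ℝ) ^ (j+1)⌋ - b * ⌊t * (b:ℝ) ^ j⌋ := by
  have hb0 : (0:ℝ) < b := by positivity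
  set m : ℤ := ⌊t * (b:ℝ) ^ (j+1)⌋ with hm
  set k : ℤ := ⌊t * (b:ℝ) ^ j⌋ with hk
  have h1 : (b:ℤ) * k ≤ m := by
    rw [hm]
    apply Int.le_floor.2
    push_cast
    calc ((b:ℝ) * k) ≤ (b:ℝ) * (t * (b:ℝ)^j) := by
          exact mul_le_mul_of_nonneg_left (Int.floor_le _) hb0.le
      _ = t * (b:ℝ)^(j+1) := by ring
  have h2 : m < (b:ℤ) * (k + 1) := by
    have h : t * (b:ℝ)^(j+1) < (b:ℝ) * ((k:ℝ)+1) := by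
      calc t * (b:ℝ)^(j+1) = (t * (b:ℝ)^j) * b := by ring
        _ < ((k:ℝ)+1) * b := by
          exact mul_lt_mul_of_pos_right (Int.lt_floor_add_one _) hb0
        _ = (b:ℝ) * ((k:ℝ)+1) := by ring
    have h' := (Int.floor_le (t * (b:ℝ)^(j+1))).trans_lt h
    rw [← hm] at h'
    exact_mod_cast h'
  have h2' : m < (b:ℤ) * k + b := by rw [mul_add, mul_one] at h2; exact h2
  have hsplit : m = (m - b * k) + (b:ℤ) * k := by ring
  rw [bdigit, ← hm]
  conv_lhs => rw [hsplit]
  rw [Int.add_mul_emod_self_left, Int.emod_eq_of_lt (by omega) (by omega)]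

lemma bdigit_sum_eq {b n : ℕ} (hb : 2 ≤ b) {t : ℝ} (ht0 : 0 ≤ t) (ht1 : t < 1) :
    ∑ j : Fin n, (bdigit b t j : ℝ) * (b:ℝ) ^ (-((j:ℕ) + 1) : ℤ)
      = ⌊t * (b:ℝ)^n⌋ * (b:ℝ) ^ (-(n:ℤ)) := by
  have hb0 : (0:ℝ) < b := by positivity
  have hbne : (b:ℝ) ≠ 0 := hb0.ne'
  set g : ℕ → ℝ := fun j => (⌊t * (b:ℝ)^j⌋ : ℝ) * (b:ℝ) ^ (-(j:ℤ)) with hg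
  have key : ∀ j : ℕ, (bdigit b t j : ℝ) * (b:ℝ) ^ (-((j:ℕ) + 1) : ℤ) = g (j+1) - g j := by
    intro j
    have hmul : (b:ℝ) * (b:ℝ) ^ (-((j:ℕ)+1) : ℤ) = (b:ℝ) ^ (-(j:ℤ)) := by
      rw [show (-(j:ℤ)) = 1 + (-((j:ℕ)+1) : ℤ) by push_cast; ring, zpow_add₀ hbne, zpow_one]
    have hexp : (-(((j:ℕ)+1 : ℕ)):ℤ) = (-((j:ℕ) + 1) : ℤ) := by push_cast; ring
    rw [bdigit_eq_sub hb, hg]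
    simp only [hexp]
    push_cast
    rw [show ((⌊t * (b:ℝ)^(j+1)⌋:ℝ) - (b:ℝ) * ⌊t * (b:ℝ)^j⌋) * (b:ℝ) ^ (-((j:ℕ) + 1) : ℤ)
        = (⌊t * (b:ℝ)^(j+1)⌋:ℝ) * (b:ℝ) ^ (-((j:ℕ) + 1) : ℤ)
          - (⌊t * (b:ℝ)^j⌋:ℝ) * ((b:ℝ) * (b:ℝ) ^ (-((j:ℕ)+1) : ℤ)) by ring, hmul]
  rw [Fin.sum_univ_eq_sum_range (fun j => (bdigit b t j : ℝ) * (b:ℝ) ^ (-((j:ℕ) + 1) : ℤ))]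
  simp only [key]
  rw [Finset.sum_range_sub g]
  have hg0 : g 0 = 0 := by
    simp only [hg, pow_zero, mul_one, Int.floor_eq_zero_iff.2 ⟨ht0, ht1⟩]
    simp
  rw [hg0, sub_zero]

lemma nat_rep_unique {b : ℕ} (hb : 2 ≤ b) :
    ∀ (n : ℕ) (c d : ℕ → ℕ), (∀ j < n, c j < b) → (∀ j < n, d j < b) →
      (∑ j ∈ Finset.range n, c j * b ^ j = ∑ j ∈ Finset.range n, d j * b ^ j) →
      ∀ j < n, c j = d j := by
  intro n
  induction n with
  | zero => intro c d _ _ _ j hj; omega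
  | succ n ih =>
    intro c d hc hd hsum j hj
    rw [Finset.sum_range_succ' (fun j => c j * b ^ j), Finset.sum_range_succ' (fun j => d j * b ^ j)] at hsum
    simp only [pow_succ, pow_zero, one_mul] at hsum
    have hfac : ∀ e : ℕ → ℕ, ∑ j ∈ Finset.range n, e (j+1) * (b ^ j * b)
        = b * ∑ j ∈ Finset.range n, e (j+1) * b ^ j := by
      intro e; rw [Finset.mul_sum]; apply Finset.sum_congr rfl; intro x _; ring
    rw [hfac c, hfac d] at hsum
    have h0 : c 0 = d 0 := by
      have := congrArg (· % b) hsum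
      simpa [Nat.mul_add_mod, Nat.mod_eq_of_lt (hc 0 (by omega)),
        Nat.mod_eq_of_lt (hd 0 (by omega))] using this
    have htail : ∑ j ∈ Finset.range n, c (j+1) * b ^ j = ∑ j ∈ Finset.range n, d (j+1) * b ^ j := by
      rw [h0] at hsum
      apply Nat.eq_of_mul_eq_mul_left (show 0 < b by omega)
      omega
    rcases j with _ | j
    · exact h0
    · exact ih (fun k => c (k+1)) (fun k => d (k+1)) (fun k hk => hc (k+1) (by omega))
        (fun k hk => hd (k+1) (by omega)) htail j (by omega)

lemma sum_digits_eq_nat_mul {b : ℕ} (hb : 2 ≤ b) (n : ℕ) (e : ℕ → ℕ) :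
    ∑ j ∈ Finset.range n, (e j : ℝ) * (b:ℝ) ^ (-((j:ℕ)+1) : ℤ)
      = ((∑ j ∈ Finset.range n, e (n-1-j) * b ^ j : ℕ) : ℝ) * (b:ℝ) ^ (-(n:ℤ)) := by
  have hbne : (b:ℝ) ≠ 0 := by positivity
  push_cast
  rw [Finset.sum_mul]
  rw [← Finset.sum_range_reflect (fun j => (e j : ℝ) * (b:ℝ) ^ (-((j:ℕ)+1) : ℤ)) n]
  apply Finset.sum_congr rfl
  intro j hj
  have hjn : j < n := Finset.mem_range.1 hj
  have hexp : (-(((n-1-j:ℕ):ℤ)+1)) = (j:ℤ) + (-(n:ℤ)) := by omega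
  rw [hexp, zpow_add₀ hbne, zpow_natCast]
  ring

lemma real_rep_unique {b n : ℕ} (hb : 2 ≤ b) (c d : ℕ → ℕ)
    (hc : ∀ j < n, c j < b) (hd : ∀ j < n, d j < b)
    (h : ∑ j ∈ Finset.range n, (c j : ℝ) * (b:ℝ) ^ (-((j:ℕ)+1) : ℤ)
       = ∑ j ∈ Finset.range n, (d j : ℝ) * (b:ℝ) ^ (-((j:ℕ)+1) : ℤ)) :
    ∀ j < n, c j = d j := by
  rw [sum_digits_eq_nat_mul hb n c, sum_digits_eq_nat_mul hb n d] at h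
  have hbpos : (0:ℝ) < (b:ℝ) ^ (-(n:ℤ)) := by positivity
  have hnat : (∑ j ∈ Finset.range n, c (n-1-j) * b ^ j)
      = ∑ j ∈ Finset.range n, d (n-1-j) * b ^ j := by
    have := mul_right_cancel₀ hbpos.ne' h
    exact_mod_cast this
  have key := nat_rep_unique hb n (fun j => c (n-1-j)) (fun j => d (n-1-j))
    (fun j hj => hc _ (by omega)) (fun j hj => hd _ (by omega)) hnat
  intro j hj
  have := key (n-1-j) (by omega)
  simpa [show n-1-(n-1-j) = j by omega] using this

lemma pow_mul_zpow_neg {b n : ℕ} (hb : 2 ≤ b) :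
    (b:ℝ) ^ (n:ℕ) * (b:ℝ) ^ (-(n:ℤ)) = 1 := by
  have hbne : (b:ℝ) ≠ 0 := by positivity
  rw [← zpow_natCast (b:ℝ) n, ← zpow_add₀ hbne]
  simp

lemma trunc_le {b n : ℕ} (hb : 2 ≤ b) (t : ℝ) :
    (⌊t * (b:ℝ)^(n:ℕ)⌋ : ℝ) * (b:ℝ) ^ (-(n:ℤ)) ≤ t ∧
      t < (⌊t * (b:ℝ)^(n:ℕ)⌋ : ℝ) * (b:ℝ) ^ (-(n:ℤ)) + (b:ℝ) ^ (-(n:ℤ)) := by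
  have hpow := pow_mul_zpow_neg (n := n) hb
  have hε : (0:ℝ) < (b:ℝ) ^ (-(n:ℤ)) := by positivity
  have h1 : (⌊t * (b:ℝ)^(n:ℕ)⌋ : ℝ) ≤ t * (b:ℝ)^(n:ℕ) := Int.floor_le _
  have h2 : t * (b:ℝ)^(n:ℕ) < ⌊t * (b:ℝ)^(n:ℕ)⌋ + 1 := Int.lt_floor_add_one _
  have e1 := mul_le_mul_of_nonneg_right h1 hε.le
  have e2 := mul_lt_mul_of_pos_right h2 hε
  have ht : t * (b:ℝ)^(n:ℕ) * (b:ℝ) ^ (-(n:ℤ)) = t := by rw [mul_assoc, hpow, mul_one]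
  constructor
  · linarith
  · nlinarith

lemma bdigit_toNat_cast {b : ℕ} (hb : 2 ≤ b) (t : ℝ) (j : ℕ) :
    (((bdigit b t j).toNat : ℕ) : ℝ) = ((bdigit b t j : ℤ) : ℝ) := by
  rw [← Int.cast_natCast, Int.toNat_of_nonneg (bdigit_nonneg hb t j)]

/-- membership of `t` in its own digit box -/
lemma self_mem_bdigit_box {b n : ℕ} (hb : 2 ≤ b) {t : ℝ} (ht0 : 0 ≤ t) (ht1 : t < 1) :
    (∑ j : Fin n, (((bdigit b t (j:ℕ)).toNat : ℕ) : ℝ) * (b:ℝ) ^ (-((j:ℕ)+1) : ℤ)) ≤ t ∧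
    t < (∑ j : Fin n, (((bdigit b t (j:ℕ)).toNat : ℕ) : ℝ) * (b:ℝ) ^ (-((j:ℕ)+1) : ℤ))
        + (b:ℝ) ^ (-(n:ℤ)) := by
  have hsum : (∑ j : Fin n, (((bdigit b t (j:ℕ)).toNat : ℕ) : ℝ) * (b:ℝ) ^ (-((j:ℕ)+1) : ℤ))
      = (⌊t * (b:ℝ)^(n:ℕ)⌋ : ℝ) * (b:ℝ) ^ (-(n:ℤ)) := by
    rw [← bdigit_sum_eq hb ht0 ht1]
    exact Finset.sum_congr rfl fun j _ => by rw [bdigit_toNat_cast hb]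
  rw [hsum]
  exact trunc_le hb t

/-- the geometric bound: digit sums are at most `1 - b^{-n}` -/
lemma digit_sum_le_one_sub {b n : ℕ} (hb : 2 ≤ b) (c : Fin n → ℕ) (hc : ∀ j, c j < b) :
    ∑ j : Fin n, (c j : ℝ) * (b:ℝ) ^ (-((j:ℕ)+1) : ℤ) ≤ 1 - (b:ℝ) ^ (-(n:ℤ)) := by
  have hbne : (b:ℝ) ≠ 0 := by positivity
  have hstep : ∀ j : ℕ, ((b:ℝ) - 1) * (b:ℝ) ^ (-((j:ℕ)+1) : ℤ)
      = (b:ℝ) ^ (-(j:ℤ)) - (b:ℝ) ^ (-((j:ℕ)+1) : ℤ) := by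
    intro j
    have : (b:ℝ) * (b:ℝ) ^ (-((j:ℕ)+1) : ℤ) = (b:ℝ) ^ (-(j:ℤ)) := by
      rw [show (-(j:ℤ)) = 1 + (-((j:ℕ)+1) : ℤ) by push_cast; ring, zpow_add₀ hbne, zpow_one]
    linarith [this]
  calc ∑ j : Fin n, (c j : ℝ) * (b:ℝ) ^ (-((j:ℕ)+1) : ℤ)
      ≤ ∑ j : Fin n, ((b:ℝ) - 1) * (b:ℝ) ^ (-((j:ℕ)+1) : ℤ) := by
        apply Finset.sum_le_sum
        intro j _
        apply mul_le_mul_of_nonneg_right _ (by positivity)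
        have := hc j
        have hcb : (c j : ℝ) ≤ (b:ℝ) - 1 := by
          have : (c j : ℝ) + 1 ≤ (b:ℝ) := by exact_mod_cast this
          linarith
        exact hcb
    _ = 1 - (b:ℝ) ^ (-(n:ℤ)) := by
        rw [Fin.sum_univ_eq_sum_range (fun j => ((b:ℝ) - 1) * (b:ℝ) ^ (-((j:ℕ)+1) : ℤ))]
        have hterm : ∀ x ∈ Finset.range n, ((b:ℝ)-1) * (b:ℝ) ^ (-((x:ℕ)+1) : ℤ)
            = (fun j : ℕ => (b:ℝ)^(-(j:ℤ))) x - (fun j : ℕ => (b:ℝ)^(-(j:ℤ))) (x+1) := by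
          intro x _
          simp only
          rw [hstep]
          norm_cast
        rw [Finset.sum_congr rfl hterm, Finset.sum_range_sub' (fun j : ℕ => (b:ℝ)^(-(j:ℤ)))]
        norm_num

lemma bdigit_eq_of_mem_box {b n : ℕ} (hb : 2 ≤ b) (c : Fin n → ℕ) (hc : ∀ j, c j < b) {t : ℝ}
    (h1 : ∑ j : Fin n, (c j : ℝ) * (b:ℝ) ^ (-((j:ℕ)+1) : ℤ) ≤ t)
    (h2 : t < (∑ j : Fin n, (c j : ℝ) * (b:ℝ) ^ (-((j:ℕ)+1) : ℤ)) + (b:ℝ) ^ (-(n:ℤ))) :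
    ∀ j : Fin n, (bdigit b t (j:ℕ)).toNat = c j := by
  have hε : (0:ℝ) < (b:ℝ) ^ (-(n:ℤ)) := by positivity
  set y := ∑ j : Fin n, (c j : ℝ) * (b:ℝ) ^ (-((j:ℕ)+1) : ℤ) with hy
  have hy0 : 0 ≤ y := Finset.sum_nonneg fun j _ => by positivity
  have ht0 : 0 ≤ t := le_trans hy0 h1
  have hy1 : y ≤ 1 - (b:ℝ) ^ (-(n:ℤ)) := digit_sum_le_one_sub hb c hc
  have ht1 : t < 1 := lt_of_lt_of_le h2 (by linarith)
  set C : ℕ → ℕ := fun j => if h : j < n then c ⟨j, h⟩ else 0 with hC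
  set D : ℕ → ℕ := fun j => (bdigit b t j).toNat with hD
  have hyC : y = ∑ j ∈ Finset.range n, (C j : ℝ) * (b:ℝ) ^ (-((j:ℕ)+1) : ℤ) := by
    rw [hy, ← Fin.sum_univ_eq_sum_range (fun j => (C j : ℝ) * (b:ℝ) ^ (-((j:ℕ)+1) : ℤ)) n]
    exact Finset.sum_congr rfl fun j _ => by simp [hC, j.isLt]
  have hTsum : ∑ j ∈ Finset.range n, (D j : ℝ) * (b:ℝ) ^ (-((j:ℕ)+1) : ℤ)
      = (⌊t * (b:ℝ)^(n:ℕ)⌋ : ℝ) * (b:ℝ) ^ (-(n:ℤ)) := by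
    rw [← Fin.sum_univ_eq_sum_range (fun j => (D j : ℝ) * (b:ℝ) ^ (-((j:ℕ)+1) : ℤ)) n,
      ← bdigit_sum_eq hb ht0 ht1]
    exact Finset.sum_congr rfl fun j _ => by rw [hD]; rw [bdigit_toNat_cast hb]
  have hyY := sum_digits_eq_nat_mul hb n C
  rw [← hyC] at hyY
  set Y : ℕ := ∑ j ∈ Finset.range n, C (n-1-j) * b ^ j with hYdef
  set F : ℤ := ⌊t * (b:ℝ)^(n:ℕ)⌋ with hF
  obtain ⟨hT1, hT2⟩ := trunc_le (n := n) hb t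
  rw [← hF] at hT1 hT2
  -- |Y - F| < 1
  have hdiff1 : ((Y:ℝ) - (F:ℝ)) * (b:ℝ) ^ (-(n:ℤ)) < 1 * (b:ℝ) ^ (-(n:ℤ)) := by
    rw [sub_mul, one_mul]; linarith [hyY, hT1, hT2, h1, h2]
  have hdiff2 : ((F:ℝ) - (Y:ℝ)) * (b:ℝ) ^ (-(n:ℤ)) < 1 * (b:ℝ) ^ (-(n:ℤ)) := by
    rw [sub_mul, one_mul]; linarith [hyY, hT1, hT2, h1, h2]
  have hYF : (Y:ℤ) = F := by
    have d1 : (Y:ℝ) - (F:ℝ) < 1 := lt_of_mul_lt_mul_right (by linarith [hdiff1]) hε.le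
    have d2 : (F:ℝ) - (Y:ℝ) < 1 := lt_of_mul_lt_mul_right (by linarith [hdiff2]) hε.le
    have d1' : (Y:ℤ) - F < 1 := by exact_mod_cast d1
    have d2' : F - (Y:ℤ) < 1 := by exact_mod_cast d2
    omega
  have hyT : y = (F:ℝ) * (b:ℝ) ^ (-(n:ℤ)) := by
    rw [hyY, show ((Y:ℝ)) = ((Y:ℤ):ℝ) by push_cast; ring, hYF]
  have hsums : ∑ j ∈ Finset.range n, (C j : ℝ) * (b:ℝ) ^ (-((j:ℕ)+1) : ℤ)
      = ∑ j ∈ Finset.range n, (D j : ℝ) * (b:ℝ) ^ (-((j:ℕ)+1) : ℤ) := by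
    rw [← hyC, hTsum]; exact hyT
  have key := real_rep_unique hb C D
    (fun j hj => by simp [hC, hj]; exact hc _)
    (fun j hj => by have h1 := bdigit_lt hb t j; have h2 := bdigit_nonneg hb t j; simp [hD]; omega)
    hsums
  intro j
  have := key (j:ℕ) j.isLt
  rw [hD] at this  -- ?
  simpa [hC, hD, j.isLt] using this.symm

/-- The elementary box `I_n(X) ⊆ [0,1)^s` attached to `X ∈ ℤ_b^{s×n}`. -/
noncomputable def elementaryBox (b s n : ℕ) (X : Matrix (Fin s) (Fin n) (ZMod b)) :
    Set (Fin s → ℝ) :=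
  Set.univ.pi fun i =>
    Set.Ico (∑ j : Fin n, ((X i j).val : ℝ) * (b : ℝ) ^ (-((j : ℕ) + 1) : ℤ))
      ((∑ j : Fin n, ((X i j).val : ℝ) * (b : ℝ) ^ (-((j : ℕ) + 1) : ℤ)) +
        (b : ℝ) ^ (-(n : ℤ)))

/-- The `n`-digit discretization `f_n(X)`: the average of `f` over `I_n(X)`. -/
noncomputable def discretization (b s n : ℕ) (f : (Fin s → ℝ) → ℝ)
    (X : Matrix (Fin s) (Fin n) (ZMod b)) : ℝ :=
  ((b : ℝ) ^ (s * n)) * ∫ x in elementaryBox b s n X, f x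

/-- The `b`-adic Walsh function `wal_{φ(A)}` for `A ∈ ℤ_b^{s×n}`, where the `i`-th
component of `φ(A)` has `b`-adic digits `a_{i,1}, …, a_{i,n}`, evaluated using the
`b`-adic digits `⌊x_i b^j⌋ mod b` of each coordinate. -/
noncomputable def walshFun (b s n : ℕ) (A : Matrix (Fin s) (Fin n) (ZMod b))
    (x : Fin s → ℝ) : ℂ :=
  Complex.exp (2 * Real.pi * Complex.I / b) ^
    (∑ i : Fin s, ∑ j : Fin n,
      ((A i j).val : ℤ) * (⌊x i * (b : ℝ) ^ ((j : ℕ) + 1)⌋ % (b : ℤ)))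

section Boxes


variable {b s n : ℕ} [NeZero b]

lemma box_subset_unitCube (hb : 2 ≤ b) (X : Matrix (Fin s) (Fin n) (ZMod b)) :
    elementaryBox b s n X ⊆ Set.univ.pi fun _ : Fin s => Set.Ico (0 : ℝ) 1 := by
  intro x hx
  rw [elementaryBox, Set.mem_univ_pi] at hx
  rw [Set.mem_univ_pi]
  intro i
  have h := hx i
  rw [Set.mem_Ico] at h ⊢
  have hε : (0:ℝ) < (b:ℝ) ^ (-(n:ℤ)) := by positivity
  have hlo : (0:ℝ) ≤ ∑ j : Fin n, (((X i j).val : ℕ) : ℝ) * (b:ℝ) ^ (-((j:ℕ)+1) : ℤ) :=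
    Finset.sum_nonneg fun j _ => by positivity
  have hhi := digit_sum_le_one_sub hb (fun j => (X i j).val) (fun j => ZMod.val_lt _)
  exact ⟨le_trans hlo h.1, lt_of_lt_of_le h.2 (by linarith)⟩

lemma digits_of_mem_box (hb : 2 ≤ b) (X : Matrix (Fin s) (Fin n) (ZMod b))
    {x : Fin s → ℝ} (hx : x ∈ elementaryBox b s n X) (i : Fin s) :
    ∀ j : Fin n, (bdigit b (x i) (j:ℕ)).toNat = (X i j).val := by
  rw [elementaryBox, Set.mem_univ_pi] at hx
  have h := Set.mem_Ico.1 (hx i)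
  exact bdigit_eq_of_mem_box hb (fun j => (X i j).val) (fun j => ZMod.val_lt _) h.1 h.2

lemma walsh_const_on_box (hb : 2 ≤ b) (A X : Matrix (Fin s) (Fin n) (ZMod b))
    {x : Fin s → ℝ} (hx : x ∈ elementaryBox b s n X) :
    walshFun b s n A x = Complex.exp (2 * Real.pi * Complex.I / b) ^
      (∑ i : Fin s, ∑ j : Fin n, (A i j).val * (X i j).val) := by
  rw [walshFun]
  have hexp : (∑ i : Fin s, ∑ j : Fin n,
        ((A i j).val : ℤ) * (⌊x i * (b : ℝ) ^ ((j : ℕ) + 1)⌋ % (b : ℤ)))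
      = ((∑ i : Fin s, ∑ j : Fin n, (A i j).val * (X i j).val : ℕ) : ℤ) := by
    push_cast
    apply Finset.sum_congr rfl
    intro i _
    apply Finset.sum_congr rfl
    intro j _
    congr 1
    have h := digits_of_mem_box hb X hx i j
    have hnn := bdigit_nonneg hb (x i) (j:ℕ)
    have : bdigit b (x i) (j:ℕ) = ((X i j).val : ℤ) := by
      rw [← h]; exact (Int.toNat_of_nonneg hnn).symm
    exact this
  rw [hexp, zpow_natCast]

lemma unitCube_eq_iUnion (hb : 2 ≤ b) :
    (Set.univ.pi fun _ : Fin s => Set.Ico (0 : ℝ) 1)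
      = ⋃ X : Matrix (Fin s) (Fin n) (ZMod b), elementaryBox b s n X := by
  apply Set.Subset.antisymm
  · intro x hx
    rw [Set.mem_univ_pi] at hx
    set M : Matrix (Fin s) (Fin n) (ZMod b) :=
      Matrix.of (fun i j => (((bdigit b (x i) (j:ℕ)).toNat : ℕ) : ZMod b)) with hM
    refine Set.mem_iUnion.2 ⟨M, ?_⟩
    rw [elementaryBox, Set.mem_univ_pi]
    intro i
    obtain ⟨h0, h1⟩ := Set.mem_Ico.1 (hx i)
    have hval : ∀ j : Fin n, (M i j).val = (bdigit b (x i) (j:ℕ)).toNat := by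
      intro j
      have hlt := bdigit_lt hb (x i) (j:ℕ)
      have hnn := bdigit_nonneg hb (x i) (j:ℕ)
      rw [hM]
      simp only [Matrix.of_apply]
      exact ZMod.val_cast_of_lt (by omega)
    simp only [hval]
    rw [Set.mem_Ico]
    exact self_mem_bdigit_box hb h0 h1
  · exact Set.iUnion_subset fun X => box_subset_unitCube hb X

lemma boxes_disjoint (hb : 2 ≤ b) :
    Pairwise (Function.onFun Disjoint (elementaryBox b s n)) := by
  intro X X' hne
  rw [Function.onFun, Set.disjoint_left]
  intro x hx hx'
  apply hne
  apply Matrix.ext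
  intro i j
  apply ZMod.val_injective
  rw [← digits_of_mem_box hb X hx i j, ← digits_of_mem_box hb X' hx' i j]

omit [NeZero b] in
lemma box_measurable (X : Matrix (Fin s) (Fin n) (ZMod b)) :
    MeasurableSet (elementaryBox b s n X) :=
  MeasurableSet.univ_pi fun _ => measurableSet_Ico

end Boxes

/-- Relationship between Walsh coefficients and discrete Fourier coefficients:
`conj (F(f)(φ(A))) = f̂_n(A)`. -/
theorem walsh_coeff_eq_dft_of_discretization (b s n : ℕ) (hb : 2 ≤ b) [NeZero b]
    (f : (Fin s → ℝ) → ℝ)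
    (hf : IntegrableOn f (Set.univ.pi fun _ : Fin s => Set.Ico (0 : ℝ) 1))
    (A : Matrix (Fin s) (Fin n) (ZMod b)) :
    conj (∫ x in Set.univ.pi fun _ : Fin s => Set.Ico (0 : ℝ) 1,
        (f x : ℂ) * conj (walshFun b s n A x))
      = ((b : ℂ) ^ (s * n))⁻¹ *
          ∑ X : Matrix (Fin s) (Fin n) (ZMod b),
            (discretization b s n f X : ℂ) *
              Complex.exp (2 * Real.pi * Complex.I / b) ^
                (∑ i : Fin s, ∑ j : Fin n, (A i j).val * (X i j).val) := by
  classical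
  set ω : ℂ := Complex.exp (2 * Real.pi * Complex.I / b) with hω
  set E : Matrix (Fin s) (Fin n) (ZMod b) → ℕ :=
    fun X => ∑ i : Fin s, ∑ j : Fin n, (A i j).val * (X i j).val with hE
  -- step 1 : remove the conjugations
  rw [← integral_conj]
  have hfe : ∀ x, conj ((f x : ℂ) * conj (walshFun b s n A x))
      = (f x : ℂ) * walshFun b s n A x := fun x => by
    rw [map_mul, Complex.conj_conj, Complex.conj_ofReal]
  simp only [hfe]
  -- step 2 : integrability on each box
  have hint : ∀ X : Matrix (Fin s) (Fin n) (ZMod b),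
      IntegrableOn (fun x => (f x : ℂ) * walshFun b s n A x) (elementaryBox b s n X) := by
    intro X
    have h1 : IntegrableOn (fun x => (f x : ℂ)) (elementaryBox b s n X) :=
      (hf.mono_set (box_subset_unitCube hb X)).ofReal
    have h2 : IntegrableOn (fun x => (f x : ℂ) * ω ^ E X) (elementaryBox b s n X) :=
      h1.mul_const _
    exact h2.congr_fun
      (fun x hx => by rw [walsh_const_on_box hb A X hx]) (box_measurable X)
  -- step 3 : split the integral over the boxes
  rw [unitCube_eq_iUnion hb (s := s) (n := n),
    integral_iUnion_fintype box_measurable (boxes_disjoint hb) hint]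
  -- step 4 : evaluate the integral on each box
  have hbox : ∀ X : Matrix (Fin s) (Fin n) (ZMod b),
      ∫ x in elementaryBox b s n X, (f x : ℂ) * walshFun b s n A x
        = ((∫ x in elementaryBox b s n X, f x : ℝ) : ℂ) * ω ^ E X := by
    intro X
    rw [setIntegral_congr_fun (box_measurable X)
      (fun x hx => by rw [walsh_const_on_box hb A X hx]),
      integral_mul_const]
    congr 1
    exact integral_ofReal (𝕜 := ℂ)
  rw [Finset.mul_sum]
  apply Finset.sum_congr rfl
  intro X _
  rw [hbox X, discretization]
  have hbne : ((b : ℂ) ^ (s * n)) ≠ 0 := by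
    have hb0 : (b : ℂ) ≠ 0 := (Nat.cast_ne_zero (R := ℂ)).2 (by omega)
    exact pow_ne_zero _ hb0
  push_cast
  field_simp
  ring
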